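/- Let Y be a real Banach space that is convex of power type r for some r ≥ 2, in the sense that there is K > 0 such that 1 − ‖(y + ỹ)/2‖ ≥ K ‖y − ỹ‖^r for all y, ỹ ∈ Y with ‖y‖ = ‖ỹ‖ = 1. Let q > 1 and S(y) := (1/q)‖y‖^q. Then there exists a constant c > 0, depending only on q, r and K, such that for all x, y ∈ Y and every y* ∈ ∂S(y): if q ≤ r then S(x) − S(y) − y*(x − y) ≥ c · max(‖y‖, ‖x − y‖)^{q−r} ‖x − y‖^r, and if q ≥ r then S(x) − S(y) − y*(x − y) ≥ c · ‖y‖^{q−r} ‖x − y‖^r. -/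

import Mathlib

open Real intervalIntegral

/-- Tangent line inequality for rpow. -/
private lemma xr_tangent {q : ℝ} (hq : 1 ≤ q) {M b : ℝ} (hM : 0 < M) (hb : 0 ≤ b) :
    M ^ q + q * M ^ (q - 1) * (b - M) ≤ b ^ q := by
  have hs : (-1 : ℝ) ≤ b / M - 1 := by
    have : 0 ≤ b / M := div_nonneg hb hM.le
    linarith
  have hber := one_add_mul_self_le_rpow_one_add hs hq
  have h1 : (1 : ℝ) + (b / M - 1) = b / M := by ring
  rw [h1] at hber
  have hMq : (0:ℝ) < M ^ q := rpow_pos_of_pos hM q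
  have h2 : (b / M) ^ q * M ^ q = b ^ q := by
    rw [← Real.mul_rpow (div_nonneg hb hM.le) hM.le, div_mul_cancel₀ _ hM.ne']
  have h3 : M ^ (q - 1) = M ^ q / M := by
    rw [Real.rpow_sub hM, Real.rpow_one]
  have := mul_le_mul_of_nonneg_right hber hMq.le
  rw [h2] at this
  calc M ^ q + q * M ^ (q - 1) * (b - M)
      = (1 + q * (b / M - 1)) * M ^ q := by
        rw [h3]; field_simp
    _ ≤ b ^ q := this

private lemma xr_g_bound {q : ℝ} (hq : 1 < q) {u : ℝ} (hu0 : 0 ≤ u) (hu : u ≤ 1/2) :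
    q * (q-1) * (min 1 (2 ^ ((2:ℝ) - q))) / 2 * u ^ 2
      ≤ 1 - (1-u) ^ q - q * u * (1-u) ^ (q - 1) := by
  set β : ℝ := min 1 (2 ^ ((2:ℝ) - q)) with hβdef
  have hβpos : 0 < β := lt_min one_pos (rpow_pos_of_pos two_pos _)
  set g : ℝ → ℝ := fun s => 1 - (1-s) ^ q - q * s * (1-s) ^ (q - 1) with hg
  set g' : ℝ → ℝ := fun s => q * (q-1) * s * (1-s) ^ (q - 2) with hg'
  have hderiv : ∀ s ∈ Set.uIcc (0:ℝ) u, HasDerivAt g (g' s) s := by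
    intro s hs
    rw [Set.uIcc_of_le hu0] at hs
    have hs1 : (1:ℝ) - s ≠ 0 := by
      have := hs.2
      intro h; nlinarith [hs.1]
    have h1 : HasDerivAt (fun s : ℝ => 1 - s) (-1) s := by
      simpa using (hasDerivAt_id s).const_sub 1
    have h2 : HasDerivAt (fun s : ℝ => (1-s) ^ q) (-1 * q * (1-s) ^ (q-1)) s :=
      h1.rpow_const (Or.inl hs1)
    have h3 : HasDerivAt (fun s : ℝ => (1-s) ^ (q-1)) (-1 * (q-1) * (1-s) ^ (q-1-1)) s :=
      h1.rpow_const (Or.inl hs1)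
    have h4 : HasDerivAt (fun s : ℝ => q * s * (1-s) ^ (q-1))
        (q * (1-s) ^ (q-1) + q * s * (-1 * (q-1) * (1-s) ^ (q-1-1))) s := by
      have := ((hasDerivAt_id s).const_mul q).mul h3
      simpa [mul_comm, mul_assoc, mul_left_comm, Pi.mul_def] using this
      -- derivative of (q*s) * f = q * f + (q*s) * f'
    have h7 := (h2.const_sub 1).sub h4
    rw [show q - 1 - 1 = q - 2 from by ring] at h7
    exact h7.congr_deriv (by show _ = q * (q-1) * s * (1-s) ^ (q - 2); ring)
  have hcont : ContinuousOn g' (Set.uIcc (0:ℝ) u) := by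
    apply ContinuousOn.mul (by fun_prop)
    apply ContinuousOn.rpow_const (by fun_prop)
    intro s hs
    rw [Set.uIcc_of_le hu0] at hs
    left
    have := hs.2
    intro h; nlinarith [hs.1]
  have hint : IntervalIntegrable g' MeasureTheory.volume 0 u :=
    hcont.intervalIntegrable
  have hftc := integral_eq_sub_of_hasDerivAt hderiv hint
  have hg0 : g 0 = 0 := by simp [hg]
  have hlow : ∀ s ∈ Set.Icc (0:ℝ) u, q * (q-1) * β * s ≤ g' s := by
    intro s hs
    have hs1 : (0:ℝ) < 1 - s := by nlinarith [hs.2]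
    have hβle : β ≤ (1-s) ^ (q - 2) := by
      rcases le_total q 2 with h2 | h2
      · refine le_trans (min_le_left _ _) ?_
        calc (1:ℝ) = (1:ℝ) ^ (q-2) := (Real.one_rpow _).symm
          _ ≤ (1-s) ^ (q-2) := by
            apply Real.rpow_le_rpow_of_nonpos hs1 (by nlinarith [hs.1]) (by linarith)
      · refine le_trans (min_le_right _ _) ?_
        have h12 : (1:ℝ)/2 ≤ 1 - s := by nlinarith [hs.2]
        calc (2:ℝ) ^ ((2:ℝ) - q) = ((1:ℝ)/2) ^ (q - 2) := by
              rw [one_div, Real.inv_rpow (by norm_num : (0:ℝ) ≤ 2),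
                ← Real.rpow_neg (by norm_num : (0:ℝ) ≤ 2), neg_sub]
          _ ≤ (1-s) ^ (q-2) := Real.rpow_le_rpow (by norm_num) h12 (by linarith)
    have hqq : 0 ≤ q * (q-1) * s :=
      mul_nonneg (mul_nonneg (by linarith) (by linarith)) hs.1
    calc q * (q-1) * β * s = (q * (q-1) * s) * β := by ring
      _ ≤ (q * (q-1) * s) * ((1-s) ^ (q-2)) := by
        exact mul_le_mul_of_nonneg_left hβle hqq
      _ = g' s := by simp only [hg']; try ring
  have hmono : (∫ s in (0:ℝ)..u, q * (q-1) * β * s) ≤ ∫ s in (0:ℝ)..u, g' s := by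
    have hcont2 : ContinuousOn (fun s : ℝ => q*(q-1)*β*s) (Set.uIcc 0 u) := by fun_prop
    exact integral_mono_on hu0 hcont2.intervalIntegrable hint hlow
  have hlhs : (∫ s in (0:ℝ)..u, q * (q-1) * β * s) = q * (q-1) * β * (u^2/2) := by
    rw [integral_const_mul, integral_id]
    ring
  have : q * (q-1) * β * (u^2/2) ≤ g u := by
    rw [← hlhs]
    calc (∫ s in (0:ℝ)..u, q * (q-1) * β * s) ≤ ∫ s in (0:ℝ)..u, g' s := hmono
      _ = g u - g 0 := hftc
      _ = g u := by rw [hg0]; ring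
  calc q * (q-1) * β / 2 * u ^ 2 = q * (q-1) * β * (u^2/2) := by ring
    _ ≤ g u := this
    _ = 1 - (1-u) ^ q - q * u * (1-u) ^ (q - 1) := rfl

private lemma xr_phi {q : ℝ} (hq : 1 < q) {t : ℝ} (ht0 : 0 ≤ t) (ht1 : t ≤ 1) :
    q * (q-1) * (min 1 (2 ^ ((2:ℝ) - q))) / 8 * t ^ 2
      ≤ 1 + (1-t) ^ q - 2 * (1 - t/2) ^ q := by
  have hM : (0:ℝ) < 1 - t/2 := by linarith
  have hb : (0:ℝ) ≤ 1 - t := by linarith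
  have hG2 := xr_tangent hq.le hM hb
  have hG1 := xr_g_bound hq (u := t/2) (by linarith) (by linarith)
  nlinarith [hG1, hG2]

set_option maxHeartbeats 1000000 in
private lemma xr_norm1 {Y : Type*} [NormedAddCommGroup Y] [NormedSpace ℝ Y]
    {r : ℝ} (hr : 2 ≤ r) {K : ℝ} (hK : 0 < K)
    (hconv : ∀ y ytld : Y, ‖y‖ = 1 → ‖ytld‖ = 1 →
      1 - ‖(1 / 2 : ℝ) • (y + ytld)‖ ≥ K * ‖y - ytld‖ ^ r)
    {q : ℝ} (hq : 1 < q) {x y : Y} (hx : ‖x‖ = 1) (hy : ‖y‖ ≤ 1) :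
    min (q * (q-1) * (min 1 (2 ^ ((2:ℝ) - q))) / 32) (2 ^ ((1:ℝ)-q) * K) * 2 ^ (-r)
        * ‖x - y‖ ^ r
      ≤ ‖x‖ ^ q + ‖y‖ ^ q - 2 * ‖(1/2 : ℝ) • (x + y)‖ ^ q := by
  have hq0 : (0:ℝ) < q := by linarith
  set β : ℝ := min 1 (2 ^ ((2:ℝ) - q)) with hβdef
  have hβpos : 0 < β := lt_min one_pos (rpow_pos_of_pos two_pos _)
  set κ : ℝ := q * (q-1) * β / 8 with hκdef
  have hκpos : 0 < κ :=
    div_pos (mul_pos (mul_pos hq0 (by linarith)) hβpos) (by norm_num)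
  set b : ℝ := ‖y‖ with hbdef
  have hb0 : 0 ≤ b := norm_nonneg y
  set d : ℝ := ‖x - y‖ with hddef
  have hd0 : 0 ≤ d := norm_nonneg _
  set m : ℝ := ‖(1/2 : ℝ) • (x + y)‖ with hmdef
  have hm0 : 0 ≤ m := norm_nonneg _
  have hd2 : d ≤ 2 := by
    calc d ≤ ‖x‖ + ‖y‖ := norm_sub_le x y
      _ ≤ 2 := by rw [hx]; linarith
  have hms : m ≤ (1 + b) / 2 := by
    have h1 : m = (1/2) * ‖x + y‖ := by
      rw [hmdef, norm_smul]; norm_num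
    have h2 : ‖x + y‖ ≤ 1 + b := by
      calc ‖x + y‖ ≤ ‖x‖ + ‖y‖ := norm_add_le x y
        _ = 1 + b := by rw [hx]
    rw [h1]; linarith
  have hs_half : (1:ℝ)/2 ≤ (1+b)/2 := by linarith
  have hs_one : (1+b)/2 ≤ 1 := by linarith
  -- F ≥ φ ≥ κ (1-b)^2
  have hphi := xr_phi hq (t := 1 - b) (by linarith) (by linarith)
  have hphi' : κ * (1-b)^2 ≤ 1 + b ^ q - 2 * ((1+b)/2) ^ q := by
    have e1 : (1:ℝ) - (1 - b) = b := by ring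
    have e2 : (1:ℝ) - (1 - b)/2 = (1+b)/2 := by ring
    rw [e1, e2] at hphi
    exact hphi
  have hmsq : m ^ q ≤ ((1+b)/2) ^ q := rpow_le_rpow hm0 hms hq0.le
  have hF1 : κ * (1-b)^2 ≤ 1 + b ^ q - 2 * m ^ q := by linarith
  -- F ≥ φ + 2^{2-q} (s - m), via s^q - m^q ≥ 2^{1-q} (s - m)
  have hspos : (0:ℝ) < (1+b)/2 := by linarith
  have hsm_gap : (2:ℝ) ^ ((1:ℝ)-q) * ((1+b)/2 - m) ≤ ((1+b)/2) ^ q - m ^ q := by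
    have hmq : m ^ q ≤ ((1+b)/2) ^ (q-1) * m := by
      rcases eq_or_lt_of_le hm0 with h | h
      · rw [← h, zero_rpow (by linarith : q ≠ 0)]
        positivity
      · have : m ^ q = m ^ (q-1) * m := by
          rw [← Real.rpow_add_one (ne_of_gt h)]
          ring_nf
        rw [this]
        have := rpow_le_rpow h.le hms (by linarith : (0:ℝ) ≤ q - 1)
        exact mul_le_mul_of_nonneg_right this hm0
    have hsq : ((1+b)/2) ^ q = ((1+b)/2) ^ (q-1) * ((1+b)/2) := by
      rw [← Real.rpow_add_one (ne_of_gt hspos)]; ring_nf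
    have hpow_half : (2:ℝ) ^ ((1:ℝ)-q) ≤ ((1+b)/2) ^ (q-1) := by
      have : (2:ℝ) ^ ((1:ℝ)-q) = ((1:ℝ)/2) ^ (q-1) := by
        rw [one_div, Real.inv_rpow (by norm_num : (0:ℝ) ≤ 2),
          ← Real.rpow_neg (by norm_num : (0:ℝ) ≤ 2), neg_sub]
      rw [this]
      exact rpow_le_rpow (by norm_num) hs_half (by linarith)
    have hsub : m ≤ (1+b)/2 := hms
    nlinarith [mul_le_mul_of_nonneg_right hpow_half (by linarith : (0:ℝ) ≤ (1+b)/2 - m)]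
  -- main case split
  rcases eq_or_lt_of_le hd0 with hd | hdpos
  · -- d = 0
    rw [← hd, zero_rpow (by linarith : r ≠ 0)]
    have : (0:ℝ) ≤ 1 + b ^ q - 2 * m ^ q := le_trans (by positivity) hF1
    rw [hx, Real.one_rpow]
    nlinarith
  have hhalf : (d/2) ^ r = 2 ^ (-r) * d ^ r := by
    rw [div_rpow hd0 (by norm_num : (0:ℝ) ≤ 2), Real.rpow_neg (by norm_num : (0:ℝ) ≤ 2)]
    ring
  have hc1a : min (q * (q-1) * β / 32) (2 ^ ((1:ℝ)-q) * K) ≤ κ / 4 := by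
    refine le_trans (min_le_left _ _) ?_
    rw [hκdef]; ring_nf; linarith [le_refl (q * (q-1) * β / 32)]
  have hc1b : min (q * (q-1) * β / 32) (2 ^ ((1:ℝ)-q) * K) ≤ 2 ^ ((1:ℝ)-q) * K :=
    min_le_right _ _
  have h2negr : (0:ℝ) < 2 ^ (-r) := rpow_pos_of_pos two_pos _
  have hdr_pos : (0:ℝ) < d ^ r := rpow_pos_of_pos hdpos _
  rw [hx, Real.one_rpow]
  rcases le_or_gt (d/2) (1-b) with hcase | hcase
  · -- t ≥ d/2 : use hF1
    have h1 : (d/2) ^ r ≤ (d/2) ^ (2:ℝ) := by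
      apply Real.rpow_le_rpow_of_exponent_ge (by linarith) (by linarith) hr
    have h2 : (d/2) ^ (2:ℝ) = (d/2) ^ (2:ℕ) := by
      rw [← Real.rpow_natCast (d/2) 2]; norm_num
    have h3 : (d/2) ^ (2:ℕ) ≤ (1-b) ^ (2:ℕ) := by
      apply pow_le_pow_left₀ (by linarith) hcase
    have h4 : κ * (d/2) ^ r ≤ κ * (1-b)^2 := by
      have : (d/2) ^ r ≤ (1-b)^2 := by
        calc (d/2) ^ r ≤ (d/2) ^ (2:ℝ) := h1
          _ = (d/2) ^ (2:ℕ) := h2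
          _ ≤ (1-b) ^ (2:ℕ) := h3
          _ = (1-b) ^ 2 := by norm_num
      exact mul_le_mul_of_nonneg_left this hκpos.le
    rw [hhalf] at h4
    have hstep := mul_le_mul_of_nonneg_right hc1a (le_of_lt (mul_pos h2negr hdr_pos))
    calc min (q * (q-1) * β / 32) (2 ^ ((1:ℝ)-q) * K) * 2 ^ (-r) * d ^ r
        = min (q * (q-1) * β / 32) (2 ^ ((1:ℝ)-q) * K) * (2 ^ (-r) * d ^ r) := by ring
      _ ≤ κ / 4 * (2 ^ (-r) * d ^ r) := hstep
      _ ≤ κ * (2 ^ (-r) * d ^ r) :=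
          mul_le_mul_of_nonneg_right (by linarith) (le_of_lt (mul_pos h2negr hdr_pos))
      _ ≤ κ * (1-b)^2 := by linarith
      _ ≤ 1 + b ^ q - 2 * m ^ q := hF1
  · -- t < d/2
    have hbpos : 0 < b := by linarith
    set v : Y := b⁻¹ • y with hvdef
    have hv : ‖v‖ = 1 := by
      rw [hvdef, norm_smul, Real.norm_eq_abs, abs_inv, abs_of_pos hbpos, ← hbdef]
      field_simp
    have hyv : ‖y - v‖ = 1 - b := by
      have e : y - v = (1 - b⁻¹) • y := by
        rw [hvdef, sub_smul, one_smul]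
      rw [e, norm_smul, Real.norm_eq_abs, ← hbdef]
      have hinv : (1:ℝ) ≤ b⁻¹ := by
        rw [le_inv_comm₀] <;> first | exact hbpos | simpa using hy
      rw [abs_of_nonpos (by linarith)]
      field_simp
      ring
    have hxv : d/2 ≤ ‖x - v‖ := by
      have : d ≤ ‖x - v‖ + ‖v - y‖ := by
        calc d = ‖x - v + (v - y)‖ := by rw [hddef]; congr 1; abel
          _ ≤ ‖x - v‖ + ‖v - y‖ := norm_add_le _ _
      rw [norm_sub_rev v y, hyv] at this
      linarith
    have hconv' := hconv x v hx hv
    have hxvr : (d/2) ^ r ≤ ‖x - v‖ ^ r := rpow_le_rpow (by linarith) hxv (by linarith)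
    have hm' : ‖(1/2 : ℝ) • (x + v)‖ ≤ 1 - K * (d/2) ^ r := by
      have := mul_le_mul_of_nonneg_left hxvr hK.le
      linarith [hconv']
    -- identity
    have hid : (1/2 : ℝ) • (x + y) = b • ((1/2 : ℝ) • (x + v)) + ((1-b)/2) • x := by
      have hbv : b • v = y := by
        rw [hvdef, smul_smul, mul_inv_cancel₀ (ne_of_gt hbpos), one_smul]
      rw [smul_smul, smul_add, smul_add, ← hbv]
      module
    have hm_le : m ≤ b * (1 - K * (d/2) ^ r) + (1-b)/2 := by
      have h1 : m ≤ b * ‖(1/2 : ℝ) • (x + v)‖ + (1-b)/2 := by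
        calc m = ‖b • ((1/2 : ℝ) • (x + v)) + ((1-b)/2) • x‖ := by rw [hmdef, hid]
          _ ≤ ‖b • ((1/2 : ℝ) • (x + v))‖ + ‖((1-b)/2) • x‖ := norm_add_le _ _
          _ = b * ‖(1/2 : ℝ) • (x + v)‖ + (1-b)/2 := by
            rw [norm_smul b, norm_smul ((1-b)/2) x, Real.norm_eq_abs b,
              Real.norm_eq_abs ((1-b)/2), hx,
              abs_of_pos hbpos, abs_of_nonneg (by linarith : (0:ℝ) ≤ (1-b)/2), mul_one]
      have h2 := mul_le_mul_of_nonneg_left hm' hb0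
      linarith
    have hsm : b * (K * (d/2) ^ r) ≤ (1+b)/2 - m := by nlinarith
    rcases le_or_gt (1/2 : ℝ) b with hbb | hbb
    · -- b ≥ 1/2 : use the gap term
      have h1 : (K/2) * (d/2) ^ r ≤ (1+b)/2 - m := by
        have hKd : 0 ≤ K * (d/2) ^ r := by positivity
        nlinarith
      have h2 : 2 ^ ((1:ℝ)-q) * ((K/2) * (d/2) ^ r) ≤ ((1+b)/2) ^ q - m ^ q := by
        calc 2 ^ ((1:ℝ)-q) * ((K/2) * (d/2) ^ r)
            ≤ 2 ^ ((1:ℝ)-q) * ((1+b)/2 - m) := by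
              apply mul_le_mul_of_nonneg_left h1 (le_of_lt (rpow_pos_of_pos two_pos _))
          _ ≤ ((1+b)/2) ^ q - m ^ q := hsm_gap
      rw [hhalf] at h2
      have hgap0 : (0:ℝ) ≤ κ * (1-b)^2 := mul_nonneg hκpos.le (sq_nonneg _)
      have hstep := mul_le_mul_of_nonneg_right hc1b (le_of_lt (mul_pos h2negr hdr_pos))
      calc min (q * (q-1) * β / 32) (2 ^ ((1:ℝ)-q) * K) * 2 ^ (-r) * d ^ r
          = min (q * (q-1) * β / 32) (2 ^ ((1:ℝ)-q) * K) * (2 ^ (-r) * d ^ r) := by ring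
        _ ≤ 2 ^ ((1:ℝ)-q) * K * (2 ^ (-r) * d ^ r) := hstep
        _ = 2 * (2 ^ ((1:ℝ)-q) * (K/2 * (2 ^ (-r) * d ^ r))) := by ring
        _ ≤ 2 * (((1+b)/2) ^ q - m ^ q) := by linarith
        _ ≤ 1 + b ^ q - 2 * m ^ q := by linarith
    · -- b < 1/2 : 1 - b > 1/2, use hF1
      have h1 : (1:ℝ)/4 ≤ (1-b)^2 := by nlinarith
      have h2 : (d/2) ^ r ≤ 1 := rpow_le_one (by linarith) (by linarith) (by linarith)
      have h4 : (κ/4) * (d/2) ^ r ≤ κ * (1-b)^2 := by nlinarith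
      rw [hhalf] at h4
      have hstep := mul_le_mul_of_nonneg_right hc1a (le_of_lt (mul_pos h2negr hdr_pos))
      calc min (q * (q-1) * β / 32) (2 ^ ((1:ℝ)-q) * K) * 2 ^ (-r) * d ^ r
          = min (q * (q-1) * β / 32) (2 ^ ((1:ℝ)-q) * K) * (2 ^ (-r) * d ^ r) := by ring
        _ ≤ κ / 4 * (2 ^ (-r) * d ^ r) := hstep
        _ ≤ κ * (1-b)^2 := h4
        _ ≤ 1 + b ^ q - 2 * m ^ q := hF1

private lemma xr_scaled_le {Y : Type*} [NormedAddCommGroup Y] [NormedSpace ℝ Y]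
    {r : ℝ} (hr : 2 ≤ r) {K : ℝ} (hK : 0 < K)
    (hconv : ∀ y ytld : Y, ‖y‖ = 1 → ‖ytld‖ = 1 →
      1 - ‖(1 / 2 : ℝ) • (y + ytld)‖ ≥ K * ‖y - ytld‖ ^ r)
    {q : ℝ} (hq : 1 < q) {x y : Y} (hyx : ‖y‖ ≤ ‖x‖) (hN : 0 < ‖x‖) :
    min (q * (q-1) * (min 1 (2 ^ ((2:ℝ) - q))) / 32) (2 ^ ((1:ℝ)-q) * K) * 2 ^ (-r)
        * ‖x‖ ^ (q - r) * ‖x - y‖ ^ r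
      ≤ ‖x‖ ^ q + ‖y‖ ^ q - 2 * ‖(1/2 : ℝ) • (x + y)‖ ^ q := by
  set c₀ : ℝ :=
    min (q * (q-1) * (min 1 (2 ^ ((2:ℝ) - q))) / 32) (2 ^ ((1:ℝ)-q) * K) * 2 ^ (-r)
    with hc₀def
  set N : ℝ := ‖x‖ with hNdef
  have hNne : N ≠ 0 := ne_of_gt hN
  have hNinv : 0 ≤ N⁻¹ := inv_nonneg.mpr hN.le
  have hx' : ‖N⁻¹ • x‖ = 1 := by
    rw [norm_smul, Real.norm_eq_abs, abs_inv, abs_of_pos hN, ← hNdef,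
      inv_mul_cancel₀ hNne]
  have hy' : ‖N⁻¹ • y‖ ≤ 1 := by
    rw [norm_smul, Real.norm_eq_abs, abs_inv, abs_of_pos hN]
    calc N⁻¹ * ‖y‖ ≤ N⁻¹ * N := by
          exact mul_le_mul_of_nonneg_left hyx hNinv
      _ = 1 := inv_mul_cancel₀ hNne
  have key := xr_norm1 hr hK hconv hq hx' hy'
  rw [hx', Real.one_rpow] at key
  have e1 : N⁻¹ • x - N⁻¹ • y = N⁻¹ • (x - y) := (smul_sub _ _ _).symm
  have e2 : (1/2 : ℝ) • (N⁻¹ • x + N⁻¹ • y) = N⁻¹ • ((1/2 : ℝ) • (x + y)) := by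
    rw [← smul_add, smul_comm]
  rw [e1, e2] at key
  have hnr : ∀ z : Y, ∀ p : ℝ, ‖N⁻¹ • z‖ ^ p = (N ^ p)⁻¹ * ‖z‖ ^ p := by
    intro z p
    rw [norm_smul, Real.norm_eq_abs, abs_inv, abs_of_pos hN,
      Real.mul_rpow hNinv (norm_nonneg z), Real.inv_rpow hN.le]
  rw [hnr (x - y) r, hnr y q, hnr ((1/2 : ℝ) • (x + y)) q] at key
  have hNq : (0:ℝ) < N ^ q := rpow_pos_of_pos hN q
  have hNr : (0:ℝ) < N ^ r := rpow_pos_of_pos hN r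
  have eN : N ^ (q - r) = N ^ q * (N ^ r)⁻¹ := by
    rw [show q - r = q + (-r) from by ring, Real.rpow_add hN, Real.rpow_neg hN.le]
  have key2 := mul_le_mul_of_nonneg_left key hNq.le
  calc c₀ * N ^ (q - r) * ‖x - y‖ ^ r
      = N ^ q * (c₀ * ((N ^ r)⁻¹ * ‖x - y‖ ^ r)) := by rw [eN]; ring
    _ ≤ N ^ q * (1 + (N ^ q)⁻¹ * ‖y‖ ^ q - 2 * ((N ^ q)⁻¹ * ‖(1/2 : ℝ) • (x + y)‖ ^ q)) :=
        key2
    _ = N ^ q + ‖y‖ ^ q - 2 * ‖(1/2 : ℝ) • (x + y)‖ ^ q := by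
        field_simp
        try ring

theorem stmt_14 {Y : Type*} [NormedAddCommGroup Y] [NormedSpace ℝ Y] [CompleteSpace Y]
    (r : ℝ) (hr : 2 ≤ r) (K : ℝ) (hK : 0 < K)
    -- Y is convex of power type r
    (hconv : ∀ y ytld : Y, ‖y‖ = 1 → ‖ytld‖ = 1 →
      1 - ‖(1 / 2 : ℝ) • (y + ytld)‖ ≥ K * ‖y - ytld‖ ^ r)
    (q : ℝ) (hq : 1 < q) :
    ∃ c : ℝ, 0 < c ∧
      ∀ (x y : Y) (ystar : Y →L[ℝ] ℝ),
        (∀ h : Y, 1 / q * ‖y‖ ^ q + ystar (h - y) ≤ 1 / q * ‖h‖ ^ q) →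
        ((q ≤ r →
          1 / q * ‖x‖ ^ q - 1 / q * ‖y‖ ^ q - ystar (x - y)
            ≥ c * (max ‖y‖ ‖x - y‖) ^ (q - r) * ‖x - y‖ ^ r) ∧
        (r ≤ q →
          1 / q * ‖x‖ ^ q - 1 / q * ‖y‖ ^ q - ystar (x - y)
            ≥ c * ‖y‖ ^ (q - r) * ‖x - y‖ ^ r)) := by
  have hq0 : (0:ℝ) < q := by linarith
  have hr0 : (0:ℝ) < r := by linarith
  set c₀ : ℝ :=
    min (q * (q-1) * (min 1 (2 ^ ((2:ℝ) - q))) / 32) (2 ^ ((1:ℝ)-q) * K) * 2 ^ (-r)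
    with hc₀def
  have hc₀pos : 0 < c₀ := by
    apply mul_pos
    · apply lt_min
      · have hβpos : (0:ℝ) < min 1 (2 ^ ((2:ℝ) - q)) :=
          lt_min one_pos (rpow_pos_of_pos two_pos _)
        exact div_pos (mul_pos (mul_pos hq0 (by linarith)) hβpos) (by norm_num)
      · exact mul_pos (rpow_pos_of_pos two_pos _) hK
    · exact rpow_pos_of_pos two_pos _
  have hminpos : (0:ℝ) < min ((2:ℝ) ^ (q-r)) 1 :=
    lt_min (rpow_pos_of_pos two_pos _) one_pos
  refine ⟨c₀ / q * min ((2:ℝ) ^ (q - r)) 1, by positivity, ?_⟩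
  intro x y ystar hsub
  -- the homogeneous midpoint inequality
  have hF : ∀ x y : Y, c₀ * (max ‖x‖ ‖y‖) ^ (q - r) * ‖x - y‖ ^ r
      ≤ ‖x‖ ^ q + ‖y‖ ^ q - 2 * ‖(1/2 : ℝ) • (x + y)‖ ^ q := by
    have hzero : ∀ x y : Y, ‖x‖ = 0 → ‖y‖ = 0 →
        c₀ * (max ‖x‖ ‖y‖) ^ (q - r) * ‖x - y‖ ^ r
          ≤ ‖x‖ ^ q + ‖y‖ ^ q - 2 * ‖(1/2 : ℝ) • (x + y)‖ ^ q := by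
      intro x y hx0 hy0
      have hx' : x = 0 := norm_eq_zero.mp hx0
      have hy' : y = 0 := norm_eq_zero.mp hy0
      subst hx'; subst hy'
      simp only [sub_zero, add_zero, smul_zero, norm_zero, max_self]
      rw [Real.zero_rpow (ne_of_gt hq0), Real.zero_rpow (ne_of_gt hr0)]
      norm_num
    intro x y
    rcases le_total ‖y‖ ‖x‖ with hyx | hxy
    · rcases eq_or_lt_of_le (norm_nonneg x) with hx0 | hx0
      · exact hzero x y hx0.symm (le_antisymm (hx0 ▸ hyx) (norm_nonneg y))
      · rw [max_eq_left hyx]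
        exact xr_scaled_le hr hK hconv hq hyx hx0
    · rcases eq_or_lt_of_le (norm_nonneg y) with hy0 | hy0
      · exact hzero x y (le_antisymm (hy0 ▸ hxy) (norm_nonneg x)) hy0.symm
      · rw [max_eq_right hxy, norm_sub_rev, add_comm x y,
          show ‖x‖ ^ q + ‖y‖ ^ q = ‖y‖ ^ q + ‖x‖ ^ q from by ring]
        exact xr_scaled_le hr hK hconv hq hxy hy0
  -- subgradient at the midpoint
  have hmid := hsub ((1/2 : ℝ) • (x + y))
  have hmy : (1/2 : ℝ) • (x + y) - y = (1/2 : ℝ) • (x - y) := by module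
  rw [hmy] at hmid
  have hlin : ystar ((1/2 : ℝ) • (x - y)) = (1/2) * ystar (x - y) := by
    rw [map_smul, smul_eq_mul]
  rw [hlin] at hmid
  have hΔF : 1/q * (‖x‖ ^ q + ‖y‖ ^ q - 2 * ‖(1/2 : ℝ) • (x + y)‖ ^ q)
      ≤ 1 / q * ‖x‖ ^ q - 1 / q * ‖y‖ ^ q - ystar (x - y) := by
    have hq' : (0:ℝ) < 1/q := by positivity
    nlinarith [hmid]
  have hΔ0 : 0 ≤ 1 / q * ‖x‖ ^ q - 1 / q * ‖y‖ ^ q - ystar (x - y) := by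
    have := hsub x
    have hxx : x - y = x - y := rfl
    linarith
  have hmain : c₀ / q * (max ‖x‖ ‖y‖) ^ (q - r) * ‖x - y‖ ^ r
      ≤ 1 / q * ‖x‖ ^ q - 1 / q * ‖y‖ ^ q - ystar (x - y) := by
    have h1 := mul_le_mul_of_nonneg_left (hF x y) (by positivity : (0:ℝ) ≤ 1/q)
    have h2 : c₀ / q * (max ‖x‖ ‖y‖) ^ (q - r) * ‖x - y‖ ^ r
        = 1/q * (c₀ * (max ‖x‖ ‖y‖) ^ (q - r) * ‖x - y‖ ^ r) := by ring
    rw [h2]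
    exact le_trans h1 hΔF
  have hNpos_of_d : 0 < ‖x - y‖ → 0 < max ‖x‖ ‖y‖ := by
    intro hd
    have h1 := norm_sub_le x y
    have h2 := le_max_left ‖x‖ ‖y‖
    have h3 := le_max_right ‖x‖ ‖y‖
    linarith
  constructor
  · intro hqr
    rw [ge_iff_le]
    rcases eq_or_lt_of_le (norm_nonneg (x - y)) with hd | hd
    · rw [← hd, Real.zero_rpow (ne_of_gt hr0), mul_zero]
      exact hΔ0
    · set M : ℝ := max ‖y‖ ‖x - y‖ with hMdef
      have hMpos : 0 < M := lt_of_lt_of_le hd (le_max_right _ _)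
      have hNpos := hNpos_of_d hd
      have hNM : max ‖x‖ ‖y‖ ≤ 2 * M := by
        have h1 : ‖x‖ ≤ ‖y‖ + ‖x - y‖ := by
          calc ‖x‖ = ‖y + (x - y)‖ := by congr 1; abel
            _ ≤ ‖y‖ + ‖x - y‖ := norm_add_le _ _
        have h2 := le_max_left ‖y‖ ‖x - y‖
        have h3 := le_max_right ‖y‖ ‖x - y‖
        apply max_le <;> linarith
      have hcmp : (2 * M) ^ (q - r) ≤ (max ‖x‖ ‖y‖) ^ (q - r) :=
        Real.rpow_le_rpow_of_nonpos hNpos hNM (by linarith)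
      have h2M : (2 * M) ^ (q - r) = 2 ^ (q - r) * M ^ (q - r) :=
        Real.mul_rpow (by norm_num) hMpos.le
      have hMq : (0:ℝ) < M ^ (q - r) := rpow_pos_of_pos hMpos _
      have hdr : (0:ℝ) < ‖x - y‖ ^ r := rpow_pos_of_pos hd _
      calc c₀ / q * min ((2:ℝ) ^ (q - r)) 1 * M ^ (q - r) * ‖x - y‖ ^ r
          ≤ c₀ / q * (2:ℝ) ^ (q - r) * M ^ (q - r) * ‖x - y‖ ^ r := by
            have hmin := min_le_left ((2:ℝ) ^ (q - r)) 1
            have hpos : (0:ℝ) ≤ c₀ / q * (M ^ (q - r) * ‖x - y‖ ^ r) := by positivity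
            nlinarith [mul_le_mul_of_nonneg_right hmin
              (mul_nonneg (mul_nonneg (by positivity : (0:ℝ) ≤ c₀/q) hMq.le) hdr.le)]
        _ = c₀ / q * ((2 * M) ^ (q - r)) * ‖x - y‖ ^ r := by rw [h2M]; ring
        _ ≤ c₀ / q * ((max ‖x‖ ‖y‖) ^ (q - r)) * ‖x - y‖ ^ r := by
            apply mul_le_mul_of_nonneg_right _ hdr.le
            exact mul_le_mul_of_nonneg_left hcmp (by positivity)
        _ ≤ _ := hmain
  · intro hrq
    rw [ge_iff_le]
    rcases eq_or_lt_of_le (norm_nonneg (x - y)) with hd | hd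
    · rw [← hd, Real.zero_rpow (ne_of_gt hr0), mul_zero]
      exact hΔ0
    · have hdr : (0:ℝ) < ‖x - y‖ ^ r := rpow_pos_of_pos hd _
      have hcmp : ‖y‖ ^ (q - r) ≤ (max ‖x‖ ‖y‖) ^ (q - r) :=
        Real.rpow_le_rpow (norm_nonneg y) (le_max_right _ _) (by linarith)
      have hyq : (0:ℝ) ≤ ‖y‖ ^ (q - r) := Real.rpow_nonneg (norm_nonneg y) _
      calc c₀ / q * min ((2:ℝ) ^ (q - r)) 1 * ‖y‖ ^ (q - r) * ‖x - y‖ ^ r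
          ≤ c₀ / q * 1 * ‖y‖ ^ (q - r) * ‖x - y‖ ^ r := by
            have hmin := min_le_right ((2:ℝ) ^ (q - r)) 1
            nlinarith [mul_le_mul_of_nonneg_right hmin
              (mul_nonneg (mul_nonneg (by positivity : (0:ℝ) ≤ c₀/q) hyq) hdr.le)]
        _ ≤ c₀ / q * (max ‖x‖ ‖y‖) ^ (q - r) * ‖x - y‖ ^ r := by
            rw [mul_one]
            apply mul_le_mul_of_nonneg_right _ hdr.le
            exact mul_le_mul_of_nonneg_left hcmp (by positivity)
        _ ≤ _ := hmain
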